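/- Let {Q_k}_{k≥0} be a family of kernels on a space of homogeneous type satisfying, uniformly in k: size |Q̃_k(x,y)| ≤ C [V_{δ^k}(x)+V(x,y)]^{-1}[δ^k/(δ^k+d(x,y))]^γ, Hölder regularity of order β in the first variable, and ∫ Q̃_k(x,y)dμ(y) = 0 for k > N. Fix η' ∈ (0, β∧γ). Then for any x,y ∈ X, k,l ∈ ℤ₊ with l > N and k ≤ l, and any φ ∈ G(x,δ^l,β,γ) with ∫φ dμ = 0 and ‖φ‖_{G(x,δ^l,β,γ)} ≤ 1, one has |∫ Q̃_k(z,y)φ(z)dμ(z)| ≤ C₁ δ^{(l−k)η'} [V_{δ^k}(x)+V(x,y)]^{-1}[δ^k/(δ^k+d(x,y))]^γ. -/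

import Mathlib

open MeasureTheory ENNReal

/-- The quasi-metric ball `B(x,r) := {y : d(x,y) < r}`. -/
def qball {X : Type*} (d : X → X → ℝ) (x : X) (r : ℝ) : Set X := {y | d x y < r}

lemma geom_lt_top (c q : ℝ) (hc : 0 ≤ c) (hq0 : 0 ≤ q) (hq1 : q < 1) :
    ∑' n : ℕ, ENNReal.ofReal (c * q ^ n) < ⊤ := by
  have h1 : ∀ n : ℕ, ENNReal.ofReal (c * q ^ n) = ENNReal.ofReal c * (ENNReal.ofReal q) ^ n := by
    intro n; rw [ENNReal.ofReal_mul hc, ENNReal.ofReal_pow hq0]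
  simp_rw [h1, ENNReal.tsum_mul_left, ENNReal.tsum_geometric]
  refine ENNReal.mul_lt_top ofReal_lt_top ?_
  rw [ENNReal.inv_lt_top]
  exact tsub_pos_of_lt (ENNReal.ofReal_lt_one.mpr hq1)

lemma rpow_geom_eq (a b : ℝ) (n : ℕ) :
    ((2:ℝ) ^ (n+1) : ℝ) ^ a * (((2:ℝ) ^ n : ℝ)⁻¹) ^ b
      = ((2:ℝ) ^ a) * ((2:ℝ) ^ (a - b)) ^ n := by
  have h2 : (0:ℝ) < 2 := by norm_num
  rw [← Real.rpow_natCast (2:ℝ) (n+1), ← Real.rpow_natCast (2:ℝ) n,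
    ← Real.rpow_neg_one ((2:ℝ) ^ (n:ℝ)), ← Real.rpow_natCast ((2:ℝ) ^ (a-b)) n,
    ← Real.rpow_mul h2.le, ← Real.rpow_mul h2.le, ← Real.rpow_mul h2.le,
    ← Real.rpow_mul h2.le, ← Real.rpow_add h2, ← Real.rpow_add h2]
  congr 1; push_cast; ring

lemma master_annuli {X : Type*} [MeasurableSpace X] (d : X → X → ℝ) (μ : Measure X)
    (x0 : X) (ρ : ℝ) (hρ : 0 < ρ)
    (G : X → ℝ≥0∞) (c : ℕ → ℝ≥0∞)
    (h0 : ∀ z, d x0 z < ρ → G z ≤ c 0)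
    (hn : ∀ (n : ℕ) (z : X), 2 ^ n * ρ ≤ d x0 z → d x0 z < 2 ^ (n + 1) * ρ → G z ≤ c (n + 1)) :
    ∃ M : X → ℝ≥0∞, Measurable M ∧ (∀ z, G z ≤ M z) ∧
      ∫⁻ z, M z ∂μ ≤ ∑' n : ℕ, c n * μ (qball d x0 (2 ^ n * ρ)) := by
  set S : ℕ → Set X := fun n => match n with
    | 0 => qball d x0 ρ
    | (m+1) => {z | 2 ^ m * ρ ≤ d x0 z ∧ d x0 z < 2 ^ (m+1) * ρ} with hS
  refine ⟨fun z => ∑' n, (toMeasurable μ (S n)).indicator (fun _ => c n) z,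
    Measurable.ennreal_tsum fun n => measurable_const.indicator (measurableSet_toMeasurable μ _),
    ?_, ?_⟩
  · intro z
    have hex : ∃ n : ℕ, d x0 z < 2 ^ n * ρ := by
      obtain ⟨n, hn'⟩ := pow_unbounded_of_one_lt (d x0 z / ρ) (one_lt_two (α := ℝ))
      exact ⟨n, by rw [div_lt_iff₀ hρ] at hn'; linarith [hn']⟩
    have hzS : z ∈ S (Nat.find hex) := by
      rcases h : Nat.find hex with - | m
      · have := Nat.find_spec hex; rw [h] at this
        simpa [hS, qball] using this
      · have h1 := Nat.find_spec hex; rw [h] at h1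
        have h2 : ¬ (d x0 z < 2 ^ m * ρ) := Nat.find_min hex (h ▸ m.lt_succ_self)
        exact ⟨not_lt.mp h2, h1⟩
    have hG : G z ≤ c (Nat.find hex) := by
      rcases h : Nat.find hex with - | m <;> rw [h] at hzS
      · exact h0 z hzS
      · exact hn m z hzS.1 hzS.2
    refine le_trans ?_ (ENNReal.le_tsum (Nat.find hex))
    rw [Set.indicator_of_mem (subset_toMeasurable μ _ hzS)]
    exact hG
  · rw [lintegral_tsum fun n =>
      (measurable_const.indicator (measurableSet_toMeasurable μ _)).aemeasurable]
    refine ENNReal.tsum_le_tsum fun n => ?_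
    rw [lintegral_indicator_const (measurableSet_toMeasurable μ _), measure_toMeasurable]
    refine mul_le_mul_right (measure_mono ?_) _
    rcases n with - | m
    · intro z hz; simpa [hS, qball] using hz
    · exact fun z hz => hz.2
lemma doub_pow {X : Type*} [MeasurableSpace X] (d : X → X → ℝ) (μ : Measure X)
    (Cμ : ℝ)
    (hdouble : ∀ (x : X) (r : ℝ), 0 < r →
      μ (qball d x (2 * r)) ≤ ENNReal.ofReal Cμ * μ (qball d x r)) :
    ∀ (x : X) (r : ℝ), 0 < r → ∀ n : ℕ,
      μ (qball d x (2 ^ n * r)) ≤ (ENNReal.ofReal Cμ) ^ n * μ (qball d x r) := by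
  intro x r hr n
  induction n with
  | zero => simp
  | succ m ih =>
    have h1 : (2:ℝ) ^ (m+1) * r = 2 * (2 ^ m * r) := by ring
    calc μ (qball d x (2 ^ (m+1) * r)) = μ (qball d x (2 * (2 ^ m * r))) := by rw [h1]
      _ ≤ ENNReal.ofReal Cμ * μ (qball d x (2 ^ m * r)) :=
          hdouble x _ (by positivity)
      _ ≤ ENNReal.ofReal Cμ * ((ENNReal.ofReal Cμ) ^ m * μ (qball d x r)) :=
          mul_le_mul_right ih _
      _ = (ENNReal.ofReal Cμ) ^ (m+1) * μ (qball d x r) := by ring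

lemma kernX {X : Type*} [MeasurableSpace X] (d : X → X → ℝ) (μ : Measure X)
    (hd0 : ∀ x z : X, 0 ≤ d x z)
    (hball : ∀ (x : X) (r : ℝ), 0 < r → 0 < μ (qball d x r) ∧ μ (qball d x r) < ⊤)
    (Cμ : ℝ) (hCμ : 1 ≤ Cμ)
    (hdouble : ∀ (x : X) (r : ℝ), 0 < r →
      μ (qball d x (2 * r)) ≤ ENNReal.ofReal Cμ * μ (qball d x r))
    (a b : ℝ) (ha : 0 ≤ a) (hab : a < b) :
    ∃ C : ℝ≥0∞, C < ⊤ ∧ ∀ (x0 : X) (ρ : ℝ), 0 < ρ →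
      ∃ M : X → ℝ≥0∞, Measurable M ∧
        (∀ z, ENNReal.ofReal ((d x0 z / ρ) ^ a *
          (((μ (qball d x0 ρ)).toReal + (μ (qball d x0 (d x0 z))).toReal)⁻¹ *
            (ρ / (ρ + d x0 z)) ^ b)) ≤ M z) ∧
        ∫⁻ z, M z ∂μ ≤ C := by
  have h2 : (0:ℝ) < 2 := two_pos
  set C0 : ℝ := Cμ * (2:ℝ) ^ a with hC0
  set q : ℝ := (2:ℝ) ^ (a - b) with hq
  have hq0 : 0 ≤ q := (Real.rpow_pos_of_pos h2 _).le
  have hq1 : q < 1 := Real.rpow_lt_one_of_one_lt_of_neg one_lt_two (by linarith)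
  have hC00 : 0 ≤ C0 := by positivity
  set t : ℕ → ℝ≥0∞ := fun n => match n with
    | 0 => 1
    | (m+1) => ENNReal.ofReal (C0 * q ^ m) with ht
  refine ⟨1 + ∑' m : ℕ, ENNReal.ofReal (C0 * q ^ m), ?_, ?_⟩
  · exact ENNReal.add_lt_top.mpr ⟨one_lt_top, geom_lt_top C0 q hC00 hq0 hq1⟩
  intro x0 ρ hρ
  -- basic ball facts
  have hb : ∀ R : ℝ, 0 < R → μ (qball d x0 R) ≠ 0 ∧ μ (qball d x0 R) ≠ ⊤ :=
    fun R hR => ⟨(hball x0 R hR).1.ne', (hball x0 R hR).2.ne⟩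
  set c : ℕ → ℝ≥0∞ := fun n => t n * (μ (qball d x0 (2 ^ n * ρ)))⁻¹ with hc
  have H0 : ∀ z, d x0 z < ρ → (ENNReal.ofReal ((d x0 z / ρ) ^ a *
      (((μ (qball d x0 ρ)).toReal + (μ (qball d x0 (d x0 z))).toReal)⁻¹ *
        (ρ / (ρ + d x0 z)) ^ b))) ≤ c 0 := by
    intro z hz
    have hVρ := hball x0 ρ hρ
    have hVρ' : 0 < (μ (qball d x0 ρ)).toReal := ENNReal.toReal_pos hVρ.1.ne' hVρ.2.ne
    have hd := hd0 x0 z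
    have h1 : (d x0 z / ρ) ^ a ≤ 1 :=
      Real.rpow_le_one (by positivity) (by rw [div_le_one hρ]; linarith) ha
    have h2' : (ρ / (ρ + d x0 z)) ^ b ≤ 1 :=
      Real.rpow_le_one (by positivity) (by rw [div_le_one (by linarith)]; linarith) (by linarith)
    have h3 : ((μ (qball d x0 ρ)).toReal + (μ (qball d x0 (d x0 z))).toReal)⁻¹ ≤
        (μ (qball d x0 ρ)).toReal⁻¹ := by
      refine inv_anti₀ hVρ' ?_
      have := ENNReal.toReal_nonneg (a := μ (qball d x0 (d x0 z)))
      linarith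
    calc ENNReal.ofReal ((d x0 z / ρ) ^ a *
          (((μ (qball d x0 ρ)).toReal + (μ (qball d x0 (d x0 z))).toReal)⁻¹ *
            (ρ / (ρ + d x0 z)) ^ b))
        ≤ ENNReal.ofReal ((μ (qball d x0 ρ)).toReal⁻¹) := by
          refine ENNReal.ofReal_le_ofReal ?_
          calc (d x0 z / ρ) ^ a * (((μ (qball d x0 ρ)).toReal +
                (μ (qball d x0 (d x0 z))).toReal)⁻¹ * (ρ / (ρ + d x0 z)) ^ b)
              ≤ 1 * ((μ (qball d x0 ρ)).toReal⁻¹ * 1) := by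
                refine mul_le_mul h1 (mul_le_mul h3 h2' (by positivity) (by positivity))
                  (by positivity) (by norm_num)
            _ = (μ (qball d x0 ρ)).toReal⁻¹ := by ring
      _ = (μ (qball d x0 ρ))⁻¹ := by
          rw [ENNReal.ofReal_inv_of_pos hVρ', ENNReal.ofReal_toReal hVρ.2.ne]
      _ = c 0 := by simp [hc, ht]
  have HN : ∀ (n : ℕ) (z : X), 2 ^ n * ρ ≤ d x0 z → d x0 z < 2 ^ (n + 1) * ρ →
      (ENNReal.ofReal ((d x0 z / ρ) ^ a *
      (((μ (qball d x0 ρ)).toReal + (μ (qball d x0 (d x0 z))).toReal)⁻¹ *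
        (ρ / (ρ + d x0 z)) ^ b))) ≤ c (n+1) := by
    intro n z hz1 hz2
    have hρn : 0 < (2:ℝ) ^ n * ρ := by positivity
    have hρn1 : 0 < (2:ℝ) ^ (n+1) * ρ := by positivity
    have hd := hd0 x0 z
    have hVn := hball x0 _ hρn
    have hVn' : 0 < (μ (qball d x0 (2 ^ n * ρ))).toReal := ENNReal.toReal_pos hVn.1.ne' hVn.2.ne
    have hdz : 0 < d x0 z := lt_of_lt_of_le hρn hz1
    have hVz := hball x0 _ hdz
    have hVz' : 0 < (μ (qball d x0 (d x0 z))).toReal := ENNReal.toReal_pos hVz.1.ne' hVz.2.ne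
    -- real-side bound
    have h1 : (d x0 z / ρ) ^ a ≤ ((2:ℝ) ^ (n+1)) ^ a := by
      refine Real.rpow_le_rpow (by positivity) ?_ ha
      rw [div_le_iff₀ hρ]; linarith
    have h3 : ((μ (qball d x0 ρ)).toReal + (μ (qball d x0 (d x0 z))).toReal)⁻¹ ≤
        (μ (qball d x0 (2 ^ n * ρ))).toReal⁻¹ := by
      refine inv_anti₀ hVn' ?_
      have hmono : μ (qball d x0 (2 ^ n * ρ)) ≤ μ (qball d x0 (d x0 z)) :=
        measure_mono (fun w hw => lt_of_lt_of_le hw hz1)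
      have := ENNReal.toReal_mono hVz.2.ne hmono
      have := ENNReal.toReal_nonneg (a := μ (qball d x0 ρ))
      linarith
    have h2' : (ρ / (ρ + d x0 z)) ^ b ≤ (((2:ℝ) ^ n)⁻¹) ^ b := by
      refine Real.rpow_le_rpow (by positivity) ?_ (by linarith)
      rw [div_le_iff₀ (by linarith), inv_mul_eq_div, le_div_iff₀ (by positivity)]
      nlinarith [hz1, hρ.le]
    have hreal : (d x0 z / ρ) ^ a *
          (((μ (qball d x0 ρ)).toReal + (μ (qball d x0 (d x0 z))).toReal)⁻¹ *
            (ρ / (ρ + d x0 z)) ^ b)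
        ≤ (((2:ℝ) ^ (n+1)) ^ a * (((2:ℝ) ^ n)⁻¹) ^ b) *
            (μ (qball d x0 (2 ^ n * ρ))).toReal⁻¹ := by
      calc (d x0 z / ρ) ^ a *
            (((μ (qball d x0 ρ)).toReal + (μ (qball d x0 (d x0 z))).toReal)⁻¹ *
              (ρ / (ρ + d x0 z)) ^ b)
          ≤ ((2:ℝ) ^ (n+1)) ^ a * ((μ (qball d x0 (2 ^ n * ρ))).toReal⁻¹ *
              (((2:ℝ) ^ n)⁻¹) ^ b) := by
            refine mul_le_mul h1 (mul_le_mul h3 h2' (by positivity) (by positivity))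
              (by positivity) (by positivity)
        _ = (((2:ℝ) ^ (n+1)) ^ a * (((2:ℝ) ^ n)⁻¹) ^ b) *
              (μ (qball d x0 (2 ^ n * ρ))).toReal⁻¹ := by ring
    -- pass to ENNReal
    have hA : ENNReal.ofReal ((((2:ℝ) ^ (n+1)) ^ a * (((2:ℝ) ^ n)⁻¹) ^ b) *
          (μ (qball d x0 (2 ^ n * ρ))).toReal⁻¹)
        = ENNReal.ofReal (((2:ℝ) ^ (n+1)) ^ a * (((2:ℝ) ^ n)⁻¹) ^ b) *
            (μ (qball d x0 (2 ^ n * ρ)))⁻¹ := by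
      rw [ENNReal.ofReal_mul (by positivity), ENNReal.ofReal_inv_of_pos hVn',
        ENNReal.ofReal_toReal hVn.2.ne]
    have hdoub : μ (qball d x0 (2 ^ (n+1) * ρ)) ≤
        ENNReal.ofReal Cμ * μ (qball d x0 (2 ^ n * ρ)) := by
      have h1' : (2:ℝ) ^ (n+1) * ρ = 2 * (2 ^ n * ρ) := by ring
      rw [h1']; exact hdouble x0 _ hρn
    have hCμ0 : ENNReal.ofReal Cμ ≠ 0 := by
      simp only [ne_eq, ENNReal.ofReal_eq_zero, not_le]; linarith
    have hinv : (μ (qball d x0 (2 ^ n * ρ)))⁻¹ ≤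
        ENNReal.ofReal Cμ * (μ (qball d x0 (2 ^ (n+1) * ρ)))⁻¹ := by
      have h5 : (ENNReal.ofReal Cμ * μ (qball d x0 (2 ^ n * ρ)))⁻¹ ≤
          (μ (qball d x0 (2 ^ (n+1) * ρ)))⁻¹ := ENNReal.inv_le_inv.mpr hdoub
      have h6 : (ENNReal.ofReal Cμ * μ (qball d x0 (2 ^ n * ρ)))⁻¹ =
          (ENNReal.ofReal Cμ)⁻¹ * (μ (qball d x0 (2 ^ n * ρ)))⁻¹ := by
        rw [ENNReal.mul_inv (Or.inl hCμ0) (Or.inl ENNReal.ofReal_ne_top)]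
      calc (μ (qball d x0 (2 ^ n * ρ)))⁻¹
          = ENNReal.ofReal Cμ * ((ENNReal.ofReal Cμ)⁻¹ * (μ (qball d x0 (2 ^ n * ρ)))⁻¹) := by
            rw [← mul_assoc, ENNReal.mul_inv_cancel hCμ0 ENNReal.ofReal_ne_top, one_mul]
        _ ≤ ENNReal.ofReal Cμ * (μ (qball d x0 (2 ^ (n+1) * ρ)))⁻¹ := by
            rw [← h6]; exact mul_le_mul_right h5 _
    calc ENNReal.ofReal ((d x0 z / ρ) ^ a *
          (((μ (qball d x0 ρ)).toReal + (μ (qball d x0 (d x0 z))).toReal)⁻¹ *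
            (ρ / (ρ + d x0 z)) ^ b))
        ≤ ENNReal.ofReal (((2:ℝ) ^ (n+1)) ^ a * (((2:ℝ) ^ n)⁻¹) ^ b) *
            (μ (qball d x0 (2 ^ n * ρ)))⁻¹ := by
          rw [← hA]; exact ENNReal.ofReal_le_ofReal hreal
      _ ≤ ENNReal.ofReal (((2:ℝ) ^ (n+1)) ^ a * (((2:ℝ) ^ n)⁻¹) ^ b) *
            (ENNReal.ofReal Cμ * (μ (qball d x0 (2 ^ (n+1) * ρ)))⁻¹) :=
          mul_le_mul_right hinv _
      _ = c (n+1) := by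
          have ht1 : t (n+1) = ENNReal.ofReal Cμ *
              ENNReal.ofReal (((2:ℝ) ^ (n+1)) ^ a * (((2:ℝ) ^ n)⁻¹) ^ b) := by
            show ENNReal.ofReal (C0 * q ^ n) = _
            rw [← ENNReal.ofReal_mul (by linarith)]
            congr 1
            rw [rpow_geom_eq a b n, hC0, hq]
            ring
          show _ = t (n+1) * (μ (qball d x0 (2 ^ (n+1) * ρ)))⁻¹
          rw [ht1]; ring
  obtain ⟨M, hM, hGM, hint⟩ := master_annuli d μ x0 ρ hρ
    (fun z => ENNReal.ofReal ((d x0 z / ρ) ^ a *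
      (((μ (qball d x0 ρ)).toReal + (μ (qball d x0 (d x0 z))).toReal)⁻¹ *
        (ρ / (ρ + d x0 z)) ^ b))) c H0 HN
  refine ⟨M, hM, hGM, le_trans hint ?_⟩
  have hcn : ∀ n, c n * μ (qball d x0 (2 ^ n * ρ)) = t n := by
    intro n
    have hpos : 0 < (2:ℝ) ^ n * ρ := by positivity
    rw [hc, mul_assoc, ENNReal.inv_mul_cancel (hb _ hpos).1 (hb _ hpos).2, mul_one]
  calc ∑' n, c n * μ (qball d x0 (2 ^ n * ρ)) = ∑' n, t n := tsum_congr hcn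
    _ = t 0 + ∑' n, t (n+1) := tsum_eq_zero_add' ENNReal.summable
    _ ≤ 1 + ∑' m : ℕ, ENNReal.ofReal (C0 * q ^ m) := le_rfl
lemma kernZ {X : Type*} [MeasurableSpace X] (d : X → X → ℝ) (μ : Measure X)
    (A0 : ℝ) (hA0 : 1 ≤ A0)
    (hd_symm : ∀ x y : X, d x y = d y x)
    (hd0 : ∀ x z : X, 0 ≤ d x z)
    (hd_tri : ∀ x y z : X, d x y ≤ A0 * (d x z + d z y))
    (hball : ∀ (x : X) (r : ℝ), 0 < r → 0 < μ (qball d x r) ∧ μ (qball d x r) < ⊤)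
    (Cμ : ℝ) (hCμ : 1 ≤ Cμ)
    (hdouble : ∀ (x : X) (r : ℝ), 0 < r →
      μ (qball d x (2 * r)) ≤ ENNReal.ofReal Cμ * μ (qball d x r))
    (m0 : ℕ) (hm0 : 4 * A0 ≤ 2 ^ m0)
    (γ : ℝ) (hγ : 0 < γ) :
    ∃ C : ℝ≥0∞, C < ⊤ ∧ ∀ (y : X) (r : ℝ), 0 < r →
      ∃ M : X → ℝ≥0∞, Measurable M ∧
        (∀ z, ENNReal.ofReal
          (((μ (qball d z r)).toReal + (μ (qball d z (d z y))).toReal)⁻¹ *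
            (r / (r + d z y)) ^ γ) ≤ M z) ∧
        ∫⁻ z, M z ∂μ ≤ C := by
  have h2 : (0:ℝ) < 2 := two_pos
  set K0 : ℝ≥0∞ := (ENNReal.ofReal Cμ) ^ m0 with hK0
  have hCμ0 : ENNReal.ofReal Cμ ≠ 0 := by
    simp only [ne_eq, ENNReal.ofReal_eq_zero, not_le]; linarith
  have hK00 : K0 ≠ 0 := pow_ne_zero _ hCμ0
  have hK0top : K0 ≠ ⊤ := by
    exact (pow_ne_top ENNReal.ofReal_ne_top)
  set qe : ℝ := (2:ℝ) ^ (-γ) with hqe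
  have hqe0 : 0 ≤ qe := (Real.rpow_pos_of_pos h2 _).le
  have hqe1 : qe < 1 := Real.rpow_lt_one_of_one_lt_of_neg one_lt_two (by linarith)
  set t : ℕ → ℝ≥0∞ := fun n => match n with
    | 0 => K0
    | (m+1) => K0 * ENNReal.ofReal (qe ^ m) with ht
  refine ⟨K0 + K0 * ∑' m : ℕ, ENNReal.ofReal (qe ^ m), ?_, ?_⟩
  · refine ENNReal.add_lt_top.mpr ⟨hK0top.lt_top, ENNReal.mul_lt_top hK0top.lt_top ?_⟩
    have := geom_lt_top 1 qe one_pos.le hqe0 hqe1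
    simpa using this
  intro y r hr
  have hb : ∀ (w : X) (R : ℝ), 0 < R → μ (qball d w R) ≠ 0 ∧ μ (qball d w R) ≠ ⊤ :=
    fun w R hR => ⟨(hball w R hR).1.ne', (hball w R hR).2.ne⟩
  set c : ℕ → ℝ≥0∞ := fun n => t n * (μ (qball d y (2 ^ n * r)))⁻¹ with hc
  -- generic inversion step
  have hswap : ∀ (z : X) (R ρz : ℝ), 0 < R → 0 < ρz →
      qball d y R ⊆ qball d z (2 ^ m0 * ρz) →
      (μ (qball d z ρz))⁻¹ ≤ K0 * (μ (qball d y R))⁻¹ := by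
    intro z R ρz hR hρz hsub
    have h1 : μ (qball d y R) ≤ K0 * μ (qball d z ρz) :=
      le_trans (measure_mono hsub) (doub_pow d μ Cμ hdouble z ρz hρz m0)
    have h5 : (K0 * μ (qball d z ρz))⁻¹ ≤ (μ (qball d y R))⁻¹ := ENNReal.inv_le_inv.mpr h1
    calc (μ (qball d z ρz))⁻¹
        = K0 * (K0⁻¹ * (μ (qball d z ρz))⁻¹) := by
          rw [← mul_assoc, ENNReal.mul_inv_cancel hK00 hK0top, one_mul]
      _ = K0 * (K0 * μ (qball d z ρz))⁻¹ := by
          rw [ENNReal.mul_inv (Or.inl hK00) (Or.inl hK0top)]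
      _ ≤ K0 * (μ (qball d y R))⁻¹ := mul_le_mul_right h5 _
  have H0 : ∀ z, d y z < r → ENNReal.ofReal
      (((μ (qball d z r)).toReal + (μ (qball d z (d z y))).toReal)⁻¹ *
        (r / (r + d z y)) ^ γ) ≤ c 0 := by
    intro z hz
    have hVr := hball z r hr
    have hVr' : 0 < (μ (qball d z r)).toReal := ENNReal.toReal_pos hVr.1.ne' hVr.2.ne
    have hdzy : 0 ≤ d z y := hd0 z y
    have hdec : (r / (r + d z y)) ^ γ ≤ 1 :=
      Real.rpow_le_one (by positivity) (by rw [div_le_one (by linarith)]; linarith) hγ.le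
    have hinv : ((μ (qball d z r)).toReal + (μ (qball d z (d z y))).toReal)⁻¹ ≤
        (μ (qball d z r)).toReal⁻¹ := by
      refine inv_anti₀ hVr' ?_
      have := ENNReal.toReal_nonneg (a := μ (qball d z (d z y)))
      linarith
    have hsub : qball d y r ⊆ qball d z (2 ^ m0 * r) := by
      intro w hw
      have : d z w ≤ A0 * (d z y + d y w) := hd_tri z w y
      have h4 : d z y = d y z := hd_symm z y
      have : d z w < A0 * (2 * r) := by
        simp only [qball, Set.mem_setOf_eq] at hw; nlinarith [hA0]
      have h6 : A0 * (2*r) ≤ 2 ^ m0 * r := by nlinarith [hr]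
      simp only [qball, Set.mem_setOf_eq]; linarith
    calc ENNReal.ofReal
          (((μ (qball d z r)).toReal + (μ (qball d z (d z y))).toReal)⁻¹ *
            (r / (r + d z y)) ^ γ)
        ≤ ENNReal.ofReal ((μ (qball d z r)).toReal⁻¹) := by
          refine ENNReal.ofReal_le_ofReal ?_
          calc ((μ (qball d z r)).toReal + (μ (qball d z (d z y))).toReal)⁻¹ *
                (r / (r + d z y)) ^ γ
              ≤ (μ (qball d z r)).toReal⁻¹ * 1 :=
                mul_le_mul hinv hdec (by positivity) (by positivity)
            _ = (μ (qball d z r)).toReal⁻¹ := by ring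
      _ = (μ (qball d z r))⁻¹ := by
          rw [ENNReal.ofReal_inv_of_pos hVr', ENNReal.ofReal_toReal hVr.2.ne]
      _ ≤ K0 * (μ (qball d y r))⁻¹ := hswap z r r hr hr hsub
      _ = c 0 := by
          show _ = t 0 * (μ (qball d y (2 ^ 0 * r)))⁻¹
          norm_num
          rfl
  have HN : ∀ (n : ℕ) (z : X), 2 ^ n * r ≤ d y z → d y z < 2 ^ (n + 1) * r →
      ENNReal.ofReal
        (((μ (qball d z r)).toReal + (μ (qball d z (d z y))).toReal)⁻¹ *
          (r / (r + d z y)) ^ γ) ≤ c (n+1) := by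
    intro n z hz1 hz2
    have hrn : 0 < (2:ℝ) ^ n * r := by positivity
    have hdyz : 0 < d y z := lt_of_lt_of_le hrn hz1
    have h4 : d z y = d y z := hd_symm z y
    have hdzy : 0 < d z y := h4 ▸ hdyz
    have hVz := hball z (d z y) hdzy
    have hVz' : 0 < (μ (qball d z (d z y))).toReal := ENNReal.toReal_pos hVz.1.ne' hVz.2.ne
    have hdec : (r / (r + d z y)) ^ γ ≤ (((2:ℝ) ^ n)⁻¹) ^ γ := by
      refine Real.rpow_le_rpow (by positivity) ?_ hγ.le
      rw [div_le_iff₀ (by linarith), inv_mul_eq_div, le_div_iff₀ (by positivity)]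
      nlinarith [hz1, hr.le]
    have hinv : ((μ (qball d z r)).toReal + (μ (qball d z (d z y))).toReal)⁻¹ ≤
        (μ (qball d z (d z y))).toReal⁻¹ := by
      refine inv_anti₀ hVz' ?_
      have := ENNReal.toReal_nonneg (a := μ (qball d z r))
      linarith
    have hsub : qball d y (2 ^ (n+1) * r) ⊆ qball d z (2 ^ m0 * d z y) := by
      intro w hw
      simp only [qball, Set.mem_setOf_eq] at hw ⊢
      have h5 : d z w ≤ A0 * (d z y + d y w) := hd_tri z w y
      have h6 : (2:ℝ) ^ (n+1) * r = 2 * (2 ^ n * r) := by ring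
      have h7 : d y w < 2 * d z y := by rw [h4]; nlinarith
      have h8 : d z w < A0 * (3 * d z y) := by nlinarith [hA0]
      have h9 : A0 * (3 * d z y) ≤ 2 ^ m0 * d z y := by nlinarith
      linarith
    calc ENNReal.ofReal
          (((μ (qball d z r)).toReal + (μ (qball d z (d z y))).toReal)⁻¹ *
            (r / (r + d z y)) ^ γ)
        ≤ ENNReal.ofReal ((((2:ℝ) ^ n)⁻¹) ^ γ) * ENNReal.ofReal ((μ (qball d z (d z y))).toReal⁻¹) := by
          rw [← ENNReal.ofReal_mul (by positivity)]
          refine ENNReal.ofReal_le_ofReal ?_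
          calc ((μ (qball d z r)).toReal + (μ (qball d z (d z y))).toReal)⁻¹ *
                (r / (r + d z y)) ^ γ
              ≤ (μ (qball d z (d z y))).toReal⁻¹ * (((2:ℝ) ^ n)⁻¹) ^ γ :=
                mul_le_mul hinv hdec (by positivity) (by positivity)
            _ = (((2:ℝ) ^ n)⁻¹) ^ γ * (μ (qball d z (d z y))).toReal⁻¹ := by ring
      _ = ENNReal.ofReal ((((2:ℝ) ^ n)⁻¹) ^ γ) * (μ (qball d z (d z y)))⁻¹ := by
          rw [ENNReal.ofReal_inv_of_pos hVz', ENNReal.ofReal_toReal hVz.2.ne]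
      _ ≤ ENNReal.ofReal ((((2:ℝ) ^ n)⁻¹) ^ γ) *
            (K0 * (μ (qball d y (2 ^ (n+1) * r)))⁻¹) :=
          mul_le_mul_right (hswap z (2 ^ (n+1) * r) (d z y) (by positivity) hdzy hsub) _
      _ = c (n+1) := by
          show _ = t (n+1) * (μ (qball d y (2 ^ (n+1) * r)))⁻¹
          have hqeq : (((2:ℝ) ^ n)⁻¹) ^ γ = qe ^ n := by
            rw [hqe, ← Real.rpow_natCast ((2:ℝ) ^ (-γ)) n, ← Real.rpow_natCast (2:ℝ) n,
              ← Real.rpow_neg_one ((2:ℝ) ^ (n:ℝ)), ← Real.rpow_mul h2.le,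
              ← Real.rpow_mul h2.le, ← Real.rpow_mul h2.le]
            congr 1; ring
          rw [hqeq]
          show _ = K0 * ENNReal.ofReal (qe ^ n) * (μ (qball d y (2 ^ (n+1) * r)))⁻¹
          ring
  obtain ⟨M, hM, hGM, hint⟩ := master_annuli d μ y r hr
    (fun z => ENNReal.ofReal
      (((μ (qball d z r)).toReal + (μ (qball d z (d z y))).toReal)⁻¹ *
        (r / (r + d z y)) ^ γ)) c H0 HN
  refine ⟨M, hM, hGM, le_trans hint ?_⟩
  have hcn : ∀ n, c n * μ (qball d y (2 ^ n * r)) = t n := by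
    intro n
    have hpos : 0 < (2:ℝ) ^ n * r := by positivity
    rw [hc]
    show t n * (μ (qball d y (2 ^ n * r)))⁻¹ * μ (qball d y (2 ^ n * r)) = t n
    rw [mul_assoc, ENNReal.inv_mul_cancel (hb _ _ hpos).1 (hb _ _ hpos).2, mul_one]
  calc ∑' n, c n * μ (qball d y (2 ^ n * r)) = ∑' n, t n := tsum_congr hcn
    _ = t 0 + ∑' n, t (n+1) := tsum_eq_zero_add' ENNReal.summable
    _ = K0 + ∑' n : ℕ, K0 * ENNReal.ofReal (qe ^ n) := rfl
    _ = K0 + K0 * ∑' m : ℕ, ENNReal.ofReal (qe ^ m) := by rw [ENNReal.tsum_mul_left]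
    _ ≤ K0 + K0 * ∑' m : ℕ, ENNReal.ofReal (qe ^ m) := le_rfl
set_option maxHeartbeats 2000000 in
/-- Let `{Q̃_k}` be kernels with the standard size condition, `β`-Hölder regularity
in the first variable, and `∫ Q̃_k(x,·) dμ = 0` for `k > N`. Fix `η' ∈ (0, β∧γ)`.
Then for `l > N`, `k ≤ l`, and any `φ ∈ G(x,δ^l,β,γ)` with `∫ φ dμ = 0` and norm
at most `1`,
`|∫ Q̃_k(z,y) φ(z) dμ(z)| ≤ C₁ δ^{(l−k)η'} [V_{δ^k}(x)+V(x,y)]⁻¹ [δ^k/(δ^k+d(x,y))]^γ`. -/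
theorem stmt18 {X : Type*} [MeasurableSpace X] (d : X → X → ℝ) (μ : Measure X)
    (A0 : ℝ) (hA0 : 1 ≤ A0)
    (hd_eq : ∀ x y : X, d x y = 0 ↔ x = y)
    (hd_symm : ∀ x y : X, d x y = d y x)
    (hd_nonneg : ∀ x y : X, 0 ≤ d x y)
    (hd_tri : ∀ x y z : X, d x y ≤ A0 * (d x z + d z y))
    (hball : ∀ (x : X) (r : ℝ), 0 < r → 0 < μ (qball d x r) ∧ μ (qball d x r) < ⊤)
    (Cμ : ℝ) (hCμ : 1 ≤ Cμ)
    (hdouble : ∀ (x : X) (r : ℝ), 0 < r →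
      μ (qball d x (2 * r)) ≤ ENNReal.ofReal Cμ * μ (qball d x r))
    (δ : ℝ) (hδ0 : 0 < δ) (hδ1 : δ < (2 * A0) ^ (-10 : ℤ))
    (β γ : ℝ) (hβ : 0 < β) (hγ : 0 < γ)
    (N : ℕ) (Q : ℕ → X → X → ℝ) (CQ : ℝ) (hCQ : 0 < CQ)
    -- size condition of the kernels:
    (hQsize : ∀ (k : ℕ) (x y : X), |Q k x y| ≤
      CQ * ((μ (qball d x (δ ^ k))).toReal + (μ (qball d x (d x y))).toReal)⁻¹
        * (δ ^ k / (δ ^ k + d x y)) ^ γ)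
    -- Hölder regularity of order `β` in the first variable:
    (hQreg : ∀ (k : ℕ) (x x' y : X), d x x' ≤ (2 * A0)⁻¹ * (δ ^ k + d x y) →
      |Q k x y - Q k x' y| ≤
        CQ * (d x x' / (δ ^ k + d x y)) ^ β
          * ((μ (qball d x (δ ^ k))).toReal + (μ (qball d x (d x y))).toReal)⁻¹
          * (δ ^ k / (δ ^ k + d x y)) ^ γ)
    -- cancellation for `k > N`:
    (hQcancel : ∀ (k : ℕ), N < k → ∀ x : X, ∫ y, Q k x y ∂μ = 0)
    (η' : ℝ) (hη'0 : 0 < η') (hη' : η' < min β γ) :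
    ∃ C₁ : ℝ, 0 < C₁ ∧ ∀ (x y : X) (k l : ℕ), N < l → k ≤ l →
      ∀ φ : X → ℝ, Integrable φ μ → (∫ z, φ z ∂μ) = 0 →
        (∀ z : X, |φ z| ≤
          ((μ (qball d x (δ ^ l))).toReal + (μ (qball d x (d x z))).toReal)⁻¹
            * (δ ^ l / (δ ^ l + d x z)) ^ γ) →
        (∀ z z' : X, d z z' ≤ (2 * A0)⁻¹ * (δ ^ l + d x z) →
          |φ z - φ z'| ≤ (d z z' / (δ ^ l + d x z)) ^ β
            * ((μ (qball d x (δ ^ l))).toReal + (μ (qball d x (d x z))).toReal)⁻¹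
            * (δ ^ l / (δ ^ l + d x z)) ^ γ) →
        |∫ z, Q k z y * φ z ∂μ| ≤
          C₁ * δ ^ (((l : ℝ) - (k : ℝ)) * η')
            * ((μ (qball d x (δ ^ k))).toReal + (μ (qball d x (d x y))).toReal)⁻¹
            * (δ ^ k / (δ ^ k + d x y)) ^ γ := by
  have hA0' : (0:ℝ) < A0 := lt_of_lt_of_le one_pos hA0
  have h2A0 : (1:ℝ) ≤ 2 * A0 := by linarith
  have hδ1' : δ < 1 := by
    have h1 : ((2 * A0) ^ (-10 : ℤ) : ℝ) ≤ 1 := by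
      rw [zpow_neg]
      have : (1:ℝ) ≤ (2 * A0) ^ (10 : ℤ) := one_le_zpow₀ h2A0 (by norm_num)
      exact inv_le_one_of_one_le₀ this
    linarith
  obtain ⟨m0, hm0⟩ : ∃ m0 : ℕ, 4 * A0 ≤ 2 ^ m0 := by
    obtain ⟨n, hn⟩ := pow_unbounded_of_one_lt (4 * A0) (one_lt_two (α := ℝ))
    exact ⟨n, hn.le⟩
  have hη'β : η' < β := lt_of_lt_of_le hη' (min_le_left _ _)
  have hη'γ : η' < γ := lt_of_lt_of_le hη' (min_le_right _ _)
  obtain ⟨CX1, hCX1, hX1⟩ := kernX d μ hd_nonneg hball Cμ hCμ hdouble η' γ hη'0.le hη'γ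
  obtain ⟨CX2, hCX2, hX2⟩ := kernX d μ hd_nonneg hball Cμ hCμ hdouble 0 (γ - η') le_rfl
    (by linarith)
  obtain ⟨CZ, hCZ, hZ⟩ := kernZ d μ A0 hA0 hd_symm hd_nonneg hd_tri hball Cμ hCμ hdouble
    m0 hm0 γ hγ
  have hCμ0 : (0:ℝ) < Cμ := by linarith
  set KD : ℝ := Cμ ^ m0 with hKD
  have hKD0 : 0 < KD := by positivity
  set CF : ℝ := 2 * KD * (2 * A0) ^ γ with hCF
  have hCF0 : 0 < CF := by
    have := Real.rpow_pos_of_pos (by linarith : (0:ℝ) < 2 * A0) γ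
    positivity
  have hA0η : 0 < (2 * A0) ^ η' := Real.rpow_pos_of_pos (by linarith) η'
  set C₁ : ℝ := CQ * CX1.toReal + CQ * CF * CZ.toReal + CQ * (2 * A0) ^ η' * CX2.toReal + 1
    with hC₁
  have hC₁0 : 0 < C₁ := by
    have h1 := ENNReal.toReal_nonneg (a := CX1)
    have h2 := ENNReal.toReal_nonneg (a := CZ)
    have h3 := ENNReal.toReal_nonneg (a := CX2)
    have : 0 ≤ CQ * CX1.toReal := by positivity
    have : 0 ≤ CQ * CF * CZ.toReal := by positivity
    have : 0 ≤ CQ * (2 * A0) ^ η' * CX2.toReal := by positivity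
    rw [hC₁]; linarith
  refine ⟨C₁, hC₁0, ?_⟩
  intro x y k l hNl hkl φ hφint hφ0 hφsize hφreg
  set r : ℝ := δ ^ k with hrdef
  set s : ℝ := δ ^ l with hsdef
  have hr : 0 < r := by rw [hrdef]; positivity
  have hs : 0 < s := by rw [hsdef]; positivity
  have hsr : s ≤ r := by
    rw [hrdef, hsdef]; exact pow_le_pow_of_le_one hδ0.le hδ1'.le hkl
  have hdxy : 0 ≤ d x y := hd_nonneg x y
  have hrdxy : 0 < r + d x y := by linarith only [hr, hdxy]
  set W1 : ℝ := ((μ (qball d x r)).toReal + (μ (qball d x (d x y))).toReal)⁻¹ with hW1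
  set W2 : ℝ := (r / (r + d x y)) ^ γ with hW2
  have hVr := hball x r hr
  have hVr' : 0 < (μ (qball d x r)).toReal := ENNReal.toReal_pos hVr.1.ne' hVr.2.ne
  have hW10 : 0 < W1 := by
    rw [hW1]
    have := ENNReal.toReal_nonneg (a := μ (qball d x (d x y)))
    positivity
  have hW20 : 0 < W2 := Real.rpow_pos_of_pos (by positivity) γ
  have hsrp : 0 < (s / r) ^ η' := Real.rpow_pos_of_pos (by positivity) η'
  have hgain : δ ^ (((l : ℝ) - (k : ℝ)) * η') = (s / r) ^ η' := by
    have h1 : s / r = δ ^ (l - k) := by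
      rw [hrdef, hsdef, pow_sub₀ δ hδ0.ne' hkl, div_eq_mul_inv]
    rw [h1, ← Real.rpow_natCast δ (l - k), ← Real.rpow_mul hδ0.le]
    congr 1
    rw [Nat.cast_sub hkl]
  have hRHS0 : 0 ≤ C₁ * δ ^ (((l : ℝ) - (k : ℝ)) * η') * W1 * W2 := by
    rw [hgain]
    positivity
  by_cases hInt : Integrable (fun z => Q k z y * φ z) μ
  swap
  · rw [integral_undef hInt, abs_zero]; exact hRHS0

  -- reduction to the difference kernel
  have h2 : Integrable (fun z => Q k x y * φ z) μ := hφint.const_mul _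
  have hsub : Integrable (fun z => (Q k z y - Q k x y) * φ z) μ := by
    have := hInt.sub h2
    simpa [sub_mul, Pi.sub_def] using this
  have hT : ∫ z, Q k z y * φ z ∂μ = ∫ z, (Q k z y - Q k x y) * φ z ∂μ := by
    have h3 : ∫ z, ((Q k z y - Q k x y) * φ z + Q k x y * φ z) ∂μ
        = ∫ z, (Q k z y - Q k x y) * φ z ∂μ + ∫ z, Q k x y * φ z ∂μ :=
      integral_add hsub h2
    have h4 : ∫ z, Q k x y * φ z ∂μ = Q k x y * ∫ z, φ z ∂μ := integral_const_mul _ _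
    have h5 : (fun z => (Q k z y - Q k x y) * φ z + Q k x y * φ z)
        = fun z => Q k z y * φ z := by funext z; ring
    rw [h5] at h3
    rw [h3, h4, hφ0, mul_zero, add_zero]
  -- the three majorants
  obtain ⟨M1, hM1m, hM1, hM1int⟩ := hX1 x s hs
  obtain ⟨M2, hM2m, hM2, hM2int⟩ := hZ y r hr
  obtain ⟨M3, hM3m, hM3, hM3int⟩ := hX2 x s hs
  set P1 : ℝ≥0∞ := ENNReal.ofReal (CQ * ((s / r) ^ η' * (W1 * W2))) with hP1
  set P2 : ℝ≥0∞ := ENNReal.ofReal ((CQ * CF) * ((s / r) ^ η' * (W1 * W2))) with hP2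
  set P3 : ℝ≥0∞ := ENNReal.ofReal ((CQ * (2 * A0) ^ η') * ((s / r) ^ η' * (W1 * W2))) with hP3
  -- pointwise bound
  have hpt : ∀ z, ENNReal.ofReal (|Q k z y - Q k x y| * |φ z|) ≤
      P1 * M1 z + (P2 * M2 z + P3 * M3 z) := by
    intro z
    have hdxz : 0 ≤ d x z := hd_nonneg x z
    have hsdxz : 0 < s + d x z := by linarith only [hs, hdxz]
    have hφb := hφsize z
    have hφb0 : 0 ≤ ((μ (qball d x s)).toReal + (μ (qball d x (d x z))).toReal)⁻¹ *
        (s / (s + d x z)) ^ γ := le_trans (abs_nonneg _) hφb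
    by_cases hnear : d x z ≤ (2 * A0)⁻¹ * (r + d x y)
    · -- near case
      have hQ : |Q k x y - Q k z y| ≤
          CQ * (d x z / (r + d x y)) ^ β * W1 * W2 := hQreg k x z y hnear
      have hβb : (d x z / (r + d x y)) ^ β ≤ (d x z / s) ^ η' * (s / r) ^ η' := by
        have key : (d x z / (r + d x y)) ^ β ≤ (d x z / r) ^ η' := by
          rcases eq_or_lt_of_le hdxz with h0 | h0
          · rw [← h0]
            simp only [zero_div]
            rw [Real.zero_rpow hβ.ne', Real.zero_rpow hη'0.ne']
          · have hu0 : 0 < d x z / (r + d x y) := by positivity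
            have hu1 : d x z / (r + d x y) ≤ 1 := by
              rw [div_le_one hrdxy]
              have hle : (2 * A0)⁻¹ ≤ 1 := inv_le_one_of_one_le₀ h2A0
              have := mul_le_mul_of_nonneg_right hle hrdxy.le
              rw [one_mul] at this
              linarith only [this, hnear]
            calc (d x z / (r + d x y)) ^ β ≤ (d x z / (r + d x y)) ^ η' :=
                Real.rpow_le_rpow_of_exponent_ge hu0 hu1 hη'β.le
              _ ≤ (d x z / r) ^ η' := by
                  refine Real.rpow_le_rpow hu0.le ?_ hη'0.le
                  exact div_le_div_of_nonneg_left hdxz hr (by linarith only [hdxy])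
        have heq : d x z / r = (d x z / s) * (s / r) := by
          field_simp
        rw [heq, Real.mul_rpow (by positivity) (by positivity)] at key
        exact key
      have hreal : |Q k z y - Q k x y| * |φ z| ≤
          (CQ * ((s / r) ^ η' * (W1 * W2))) *
            ((d x z / s) ^ η' *
              (((μ (qball d x s)).toReal + (μ (qball d x (d x z))).toReal)⁻¹ *
                (s / (s + d x z)) ^ γ)) := by
        rw [abs_sub_comm]
        calc |Q k x y - Q k z y| * |φ z|
            ≤ (CQ * (d x z / (r + d x y)) ^ β * W1 * W2) *
              (((μ (qball d x s)).toReal + (μ (qball d x (d x z))).toReal)⁻¹ *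
                (s / (s + d x z)) ^ γ) :=
              mul_le_mul hQ hφb (abs_nonneg _) (le_trans (abs_nonneg _) hQ)
          _ ≤ (CQ * ((d x z / s) ^ η' * (s / r) ^ η') * W1 * W2) *
              (((μ (qball d x s)).toReal + (μ (qball d x (d x z))).toReal)⁻¹ *
                (s / (s + d x z)) ^ γ) := by
              have h7 : 0 ≤ W1 * W2 := by positivity
              have h8 : CQ * (d x z / (r + d x y)) ^ β * W1 * W2 ≤
                  CQ * ((d x z / s) ^ η' * (s / r) ^ η') * W1 * W2 := by
                have h8a := mul_le_mul_of_nonneg_left hβb hCQ.le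
                exact mul_le_mul_of_nonneg_right
                  (mul_le_mul_of_nonneg_right h8a hW10.le) hW20.le
              exact mul_le_mul_of_nonneg_right h8 hφb0
          _ = (CQ * ((s / r) ^ η' * (W1 * W2))) *
              ((d x z / s) ^ η' *
                (((μ (qball d x s)).toReal + (μ (qball d x (d x z))).toReal)⁻¹ *
                  (s / (s + d x z)) ^ γ)) := by ring
      calc ENNReal.ofReal (|Q k z y - Q k x y| * |φ z|)
          ≤ ENNReal.ofReal ((CQ * ((s / r) ^ η' * (W1 * W2))) *
              ((d x z / s) ^ η' *
                (((μ (qball d x s)).toReal + (μ (qball d x (d x z))).toReal)⁻¹ *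
                  (s / (s + d x z)) ^ γ))) := ENNReal.ofReal_le_ofReal hreal
        _ = P1 * ENNReal.ofReal ((d x z / s) ^ η' *
              (((μ (qball d x s)).toReal + (μ (qball d x (d x z))).toReal)⁻¹ *
                (s / (s + d x z)) ^ γ)) := by
            rw [hP1, ← ENNReal.ofReal_mul (by positivity)]
        _ ≤ P1 * M1 z := mul_le_mul_right (hM1 z) _
        _ ≤ P1 * M1 z + (P2 * M2 z + P3 * M3 z) := le_self_add
    · -- far case
      push_neg at hnear
      have hc0 : 0 < (2 * A0)⁻¹ * (r + d x y) := by positivity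
      have hdxz0 : 0 < d x z := lt_trans hc0 hnear
      have hVxz := hball x (d x z) hdxz0
      have hVxz' : 0 < (μ (qball d x (d x z))).toReal :=
        ENNReal.toReal_pos hVxz.1.ne' hVxz.2.ne
      -- φ bound, version 1 (full gain in the volume factor)
      have hF1 : ((μ (qball d x s)).toReal + (μ (qball d x (d x z))).toReal)⁻¹ *
          (s / (s + d x z)) ^ γ ≤ CF * ((s / r) ^ η' * (W1 * W2)) := by
        have hsub1 : qball d x r ⊆ qball d x (2 ^ m0 * d x z) := by
          intro w hw
          simp only [qball, Set.mem_setOf_eq] at hw ⊢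
          have h9 : r + d x y < 2 * A0 * d x z := by
            have h9a := mul_lt_mul_of_pos_left hnear
              (by linarith only [hA0'] : (0:ℝ) < 2 * A0)
            rwa [← mul_assoc, mul_inv_cancel₀ (by linarith only [hA0'] : (2:ℝ) * A0 ≠ 0),
              one_mul] at h9a
          have e1 : 4 * A0 * d x z ≤ 2 ^ m0 * d x z :=
            mul_le_mul_of_nonneg_right hm0 hdxz0.le
          have e2 : 0 < A0 * d x z := mul_pos hA0' hdxz0
          linarith only [hw, h9, e1, e2, hdxy]
        have hsub2 : qball d x (d x y) ⊆ qball d x (2 ^ m0 * d x z) := by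
          intro w hw
          simp only [qball, Set.mem_setOf_eq] at hw ⊢
          have h9 : r + d x y < 2 * A0 * d x z := by
            have h9a := mul_lt_mul_of_pos_left hnear
              (by linarith only [hA0'] : (0:ℝ) < 2 * A0)
            rwa [← mul_assoc, mul_inv_cancel₀ (by linarith only [hA0'] : (2:ℝ) * A0 ≠ 0),
              one_mul] at h9a
          have e1 : 4 * A0 * d x z ≤ 2 ^ m0 * d x z :=
            mul_le_mul_of_nonneg_right hm0 hdxz0.le
          have e2 : 0 < A0 * d x z := mul_pos hA0' hdxz0
          linarith only [hw, h9, e1, e2, hr]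
        have hdoubz : μ (qball d x (2 ^ m0 * d x z)) ≤
            (ENNReal.ofReal Cμ) ^ m0 * μ (qball d x (d x z)) :=
          doub_pow d μ Cμ hdouble x (d x z) hdxz0 m0
        have hfin : ((ENNReal.ofReal Cμ) ^ m0 * μ (qball d x (d x z))) ≠ ⊤ :=
          ENNReal.mul_ne_top (pow_ne_top ENNReal.ofReal_ne_top) hVxz.2.ne
        have htr : ((ENNReal.ofReal Cμ) ^ m0 * μ (qball d x (d x z))).toReal =
            KD * (μ (qball d x (d x z))).toReal := by
          rw [ENNReal.toReal_mul, ENNReal.toReal_pow, ENNReal.toReal_ofReal hCμ0.le, hKD]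
        have hVrle : (μ (qball d x r)).toReal ≤ KD * (μ (qball d x (d x z))).toReal := by
          rw [← htr]
          exact ENNReal.toReal_mono hfin (le_trans (measure_mono hsub1) hdoubz)
        have hVxyle : (μ (qball d x (d x y))).toReal ≤ KD * (μ (qball d x (d x z))).toReal := by
          rw [← htr]
          exact ENNReal.toReal_mono hfin (le_trans (measure_mono hsub2) hdoubz)
        have hinv1 : ((μ (qball d x s)).toReal + (μ (qball d x (d x z))).toReal)⁻¹ ≤
            (μ (qball d x (d x z))).toReal⁻¹ := by
          refine inv_anti₀ hVxz' ?_
          have := ENNReal.toReal_nonneg (a := μ (qball d x s))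
          linarith only [this]
        have hinv2 : (μ (qball d x (d x z))).toReal⁻¹ ≤ 2 * KD * W1 := by
          have hsum : (μ (qball d x r)).toReal + (μ (qball d x (d x y))).toReal ≤
              2 * KD * (μ (qball d x (d x z))).toReal := by
            linarith only [hVrle, hVxyle]
          have h10 : (2 * KD * (μ (qball d x (d x z))).toReal)⁻¹ ≤ W1 := by
            rw [hW1]
            refine inv_anti₀ (by positivity) hsum
          calc (μ (qball d x (d x z))).toReal⁻¹
              = 2 * KD * (2 * KD * (μ (qball d x (d x z))).toReal)⁻¹ := by
                field_simp
            _ ≤ 2 * KD * W1 := mul_le_mul_of_nonneg_left h10 (by positivity)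
        have hdec : (s / (s + d x z)) ^ γ ≤ (2 * A0) ^ γ * ((s / r) ^ η' * W2) := by
          have hbase : s / (s + d x z) ≤ 2 * A0 * ((s / r) * (r / (r + d x y))) := by
            have hb1 : s / (s + d x z) ≤ s / d x z :=
              div_le_div_of_nonneg_left hs.le hdxz0 (by linarith only [hs])
            have hb2 : s / d x z ≤ s / ((2 * A0)⁻¹ * (r + d x y)) :=
              div_le_div_of_nonneg_left hs.le hc0 hnear.le
            have hb3 : s / ((2 * A0)⁻¹ * (r + d x y)) =
                2 * A0 * ((s / r) * (r / (r + d x y))) := by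
              field_simp
            linarith only [hb1, hb2, hb3.le]
          calc (s / (s + d x z)) ^ γ
              ≤ (2 * A0 * ((s / r) * (r / (r + d x y)))) ^ γ :=
                Real.rpow_le_rpow (by positivity) hbase hγ.le
            _ = (2 * A0) ^ γ * ((s / r) ^ γ * (r / (r + d x y)) ^ γ) := by
                rw [Real.mul_rpow (by linarith) (by positivity),
                  Real.mul_rpow (by positivity) (by positivity),
                  Real.mul_rpow (by positivity) (by positivity)]
            _ ≤ (2 * A0) ^ γ * ((s / r) ^ η' * W2) := by
                have hsr1 : s / r ≤ 1 := div_le_one_of_le₀ hsr hr.le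
                have h11 : (s / r) ^ γ ≤ (s / r) ^ η' :=
                  Real.rpow_le_rpow_of_exponent_ge (by positivity) hsr1 hη'γ.le
                have h12 : 0 < (2 * A0) ^ γ := Real.rpow_pos_of_pos (by linarith) γ
                rw [hW2]
                exact mul_le_mul_of_nonneg_left
                  (mul_le_mul_of_nonneg_right h11
                    (Real.rpow_nonneg (by positivity) γ)) h12.le
        calc ((μ (qball d x s)).toReal + (μ (qball d x (d x z))).toReal)⁻¹ *
              (s / (s + d x z)) ^ γ
            ≤ (2 * KD * W1) * ((2 * A0) ^ γ * ((s / r) ^ η' * W2)) := by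
              refine mul_le_mul (le_trans hinv1 hinv2) hdec (by positivity) (by positivity)
          _ = CF * ((s / r) ^ η' * (W1 * W2)) := by rw [hCF]; ring
      -- split |Qzy - Qxy| ≤ |Qzy| + |Qxy|
      have hsplit : |Q k z y - Q k x y| * |φ z| ≤
          |Q k z y| * |φ z| + |Q k x y| * |φ z| := by
        have h17 := mul_le_mul_of_nonneg_right (abs_sub (Q k z y) (Q k x y))
          (abs_nonneg (φ z))
        rw [add_mul] at h17
        exact h17
      -- piece 1
      have hp1 : |Q k z y| * |φ z| ≤
          ((CQ * CF) * ((s / r) ^ η' * (W1 * W2))) *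
            (((μ (qball d z r)).toReal + (μ (qball d z (d z y))).toReal)⁻¹ *
              (r / (r + d z y)) ^ γ) := by
        have hq := hQsize k z y
        have hφ' : |φ z| ≤ CF * ((s / r) ^ η' * (W1 * W2)) := le_trans hφb hF1
        calc |Q k z y| * |φ z|
            ≤ (CQ * (((μ (qball d z r)).toReal + (μ (qball d z (d z y))).toReal)⁻¹ *
                (r / (r + d z y)) ^ γ)) * (CF * ((s / r) ^ η' * (W1 * W2))) := by
              refine mul_le_mul (by rw [← mul_assoc]; exact hq) hφ' (abs_nonneg _) ?_
              have h13 := ENNReal.toReal_nonneg (a := μ (qball d z r))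
              have h14 := ENNReal.toReal_nonneg (a := μ (qball d z (d z y)))
              have hdzy0 : 0 ≤ d z y := hd_nonneg z y
              have h15' : 0 ≤ (r / (r + d z y)) ^ γ :=
                Real.rpow_nonneg (div_nonneg hr.le (by linarith only [hr, hdzy0])) γ
              have h16' : 0 ≤ ((μ (qball d z r)).toReal + (μ (qball d z (d z y))).toReal)⁻¹ :=
                inv_nonneg.mpr (by linarith only [h13, h14])
              exact mul_nonneg hCQ.le (mul_nonneg h16' h15')
          _ = ((CQ * CF) * ((s / r) ^ η' * (W1 * W2))) *
              (((μ (qball d z r)).toReal + (μ (qball d z (d z y))).toReal)⁻¹ *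
                (r / (r + d z y)) ^ γ) := by ring
      -- piece 2
      have hp2 : |Q k x y| * |φ z| ≤
          ((CQ * (2 * A0) ^ η') * ((s / r) ^ η' * (W1 * W2))) *
            ((d x z / s) ^ (0:ℝ) *
              (((μ (qball d x s)).toReal + (μ (qball d x (d x z))).toReal)⁻¹ *
                (s / (s + d x z)) ^ (γ - η'))) := by
        have hq : |Q k x y| ≤ CQ * (W1 * W2) := by
          have := hQsize k x y
          rw [← hW1, ← hW2] at this
          calc |Q k x y| ≤ CQ * W1 * W2 := this
            _ = CQ * (W1 * W2) := by ring
        have hφdec : (s / (s + d x z)) ^ γ =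
            (s / (s + d x z)) ^ η' * (s / (s + d x z)) ^ (γ - η') := by
          rw [← Real.rpow_add (by positivity)]
          congr 1; ring
        have hb1 : (s / (s + d x z)) ^ η' ≤ (2 * A0) ^ η' * (s / r) ^ η' := by
          have hbase : s / (s + d x z) ≤ 2 * A0 * (s / r) := by
            have hb1' : s / (s + d x z) ≤ s / d x z :=
              div_le_div_of_nonneg_left hs.le hdxz0 (by linarith only [hs])
            have hb2' : s / d x z ≤ s / ((2 * A0)⁻¹ * (r + d x y)) :=
              div_le_div_of_nonneg_left hs.le hc0 hnear.le
            have hb3' : s / ((2 * A0)⁻¹ * (r + d x y)) ≤ 2 * A0 * (s / r) := by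
              have he : s / ((2 * A0)⁻¹ * (r + d x y)) = 2 * A0 * (s / (r + d x y)) := by
                field_simp
              rw [he]
              have h15 : s / (r + d x y) ≤ s / r :=
                div_le_div_of_nonneg_left hs.le hr (by linarith only [hdxy])
              exact mul_le_mul_of_nonneg_left h15 (by positivity)
            linarith only [hb1', hb2', hb3']
          calc (s / (s + d x z)) ^ η' ≤ (2 * A0 * (s / r)) ^ η' :=
              Real.rpow_le_rpow (by positivity) hbase hη'0.le
            _ = (2 * A0) ^ η' * (s / r) ^ η' :=
              Real.mul_rpow (by linarith) (by positivity)
        have hI30 : 0 ≤ ((μ (qball d x s)).toReal + (μ (qball d x (d x z))).toReal)⁻¹ := by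
          have h13 := ENNReal.toReal_nonneg (a := μ (qball d x s))
          have h14 := ENNReal.toReal_nonneg (a := μ (qball d x (d x z)))
          positivity
        have hT0 : 0 ≤ (s / (s + d x z)) ^ (γ - η') := Real.rpow_nonneg (by positivity) _
        calc |Q k x y| * |φ z|
            ≤ (CQ * (W1 * W2)) *
              (((μ (qball d x s)).toReal + (μ (qball d x (d x z))).toReal)⁻¹ *
                (s / (s + d x z)) ^ γ) :=
              mul_le_mul hq hφb (abs_nonneg _) (by positivity)
          _ = (CQ * (W1 * W2)) *
              (((μ (qball d x s)).toReal + (μ (qball d x (d x z))).toReal)⁻¹ *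
                ((s / (s + d x z)) ^ η' * (s / (s + d x z)) ^ (γ - η'))) := by
              rw [← hφdec]
          _ ≤ (CQ * (W1 * W2)) *
              (((μ (qball d x s)).toReal + (μ (qball d x (d x z))).toReal)⁻¹ *
                (((2 * A0) ^ η' * (s / r) ^ η') * (s / (s + d x z)) ^ (γ - η'))) := by
              refine mul_le_mul_of_nonneg_left ?_ (by positivity)
              refine mul_le_mul_of_nonneg_left ?_ hI30
              exact mul_le_mul_of_nonneg_right hb1 hT0
          _ = ((CQ * (2 * A0) ^ η') * ((s / r) ^ η' * (W1 * W2))) *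
              (1 * (((μ (qball d x s)).toReal + (μ (qball d x (d x z))).toReal)⁻¹ *
                (s / (s + d x z)) ^ (γ - η'))) := by ring
          _ = ((CQ * (2 * A0) ^ η') * ((s / r) ^ η' * (W1 * W2))) *
              ((d x z / s) ^ (0:ℝ) *
                (((μ (qball d x s)).toReal + (μ (qball d x (d x z))).toReal)⁻¹ *
                  (s / (s + d x z)) ^ (γ - η'))) := by
              rw [Real.rpow_zero]
      -- combine far pieces
      calc ENNReal.ofReal (|Q k z y - Q k x y| * |φ z|)
          ≤ ENNReal.ofReal (|Q k z y| * |φ z| + |Q k x y| * |φ z|) :=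
            ENNReal.ofReal_le_ofReal hsplit
        _ = ENNReal.ofReal (|Q k z y| * |φ z|) + ENNReal.ofReal (|Q k x y| * |φ z|) :=
            ENNReal.ofReal_add (by positivity) (by positivity)
        _ ≤ P2 * M2 z + P3 * M3 z := by
            refine add_le_add ?_ ?_
            · calc ENNReal.ofReal (|Q k z y| * |φ z|)
                  ≤ ENNReal.ofReal (((CQ * CF) * ((s / r) ^ η' * (W1 * W2))) *
                    (((μ (qball d z r)).toReal + (μ (qball d z (d z y))).toReal)⁻¹ *
                      (r / (r + d z y)) ^ γ)) := ENNReal.ofReal_le_ofReal hp1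
                _ = P2 * ENNReal.ofReal
                    (((μ (qball d z r)).toReal + (μ (qball d z (d z y))).toReal)⁻¹ *
                      (r / (r + d z y)) ^ γ) := by
                    rw [hP2, ← ENNReal.ofReal_mul (by positivity)]
                _ ≤ P2 * M2 z := mul_le_mul_right (hM2 z) _
            · calc ENNReal.ofReal (|Q k x y| * |φ z|)
                  ≤ ENNReal.ofReal (((CQ * (2 * A0) ^ η') * ((s / r) ^ η' * (W1 * W2))) *
                    ((d x z / s) ^ (0:ℝ) *
                      (((μ (qball d x s)).toReal + (μ (qball d x (d x z))).toReal)⁻¹ *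
                        (s / (s + d x z)) ^ (γ - η')))) := ENNReal.ofReal_le_ofReal hp2
                _ = P3 * ENNReal.ofReal ((d x z / s) ^ (0:ℝ) *
                      (((μ (qball d x s)).toReal + (μ (qball d x (d x z))).toReal)⁻¹ *
                        (s / (s + d x z)) ^ (γ - η'))) := by
                    rw [hP3, ← ENNReal.ofReal_mul (by positivity)]
                _ ≤ P3 * M3 z := mul_le_mul_right (hM3 z) _
        _ ≤ P1 * M1 z + (P2 * M2 z + P3 * M3 z) := self_le_add_left _ _
  -- integrate the pointwise bound
  have hlint : ∫⁻ z, ENNReal.ofReal (|Q k z y - Q k x y| * |φ z|) ∂μ ≤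
      P1 * CX1 + (P2 * CZ + P3 * CX2) := by
    calc ∫⁻ z, ENNReal.ofReal (|Q k z y - Q k x y| * |φ z|) ∂μ
        ≤ ∫⁻ z, (P1 * M1 z + (P2 * M2 z + P3 * M3 z)) ∂μ := lintegral_mono hpt
      _ = P1 * ∫⁻ z, M1 z ∂μ + (P2 * ∫⁻ z, M2 z ∂μ + P3 * ∫⁻ z, M3 z ∂μ) := by
          rw [lintegral_add_left (hM1m.const_mul _), lintegral_add_left (hM2m.const_mul _),
            lintegral_const_mul _ hM1m, lintegral_const_mul _ hM2m, lintegral_const_mul _ hM3m]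
      _ ≤ P1 * CX1 + (P2 * CZ + P3 * CX2) :=
          add_le_add (mul_le_mul_right hM1int _)
            (add_le_add (mul_le_mul_right hM2int _) (mul_le_mul_right hM3int _))
  have hfin1 : P1 * CX1 ≠ ⊤ := ENNReal.mul_ne_top ENNReal.ofReal_ne_top hCX1.ne
  have hfin2 : P2 * CZ ≠ ⊤ := ENNReal.mul_ne_top ENNReal.ofReal_ne_top hCZ.ne
  have hfin3 : P3 * CX2 ≠ ⊤ := ENNReal.mul_ne_top ENNReal.ofReal_ne_top hCX2.ne
  have hfin : P1 * CX1 + (P2 * CZ + P3 * CX2) ≠ ⊤ :=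
    ENNReal.add_ne_top.mpr ⟨hfin1, ENNReal.add_ne_top.mpr ⟨hfin2, hfin3⟩⟩
  have hsub' : Integrable (fun z => |Q k z y - Q k x y| * |φ z|) μ := by
    simpa [abs_mul] using hsub.abs
  have heqI : ∫ z, |Q k z y - Q k x y| * |φ z| ∂μ =
      (∫⁻ z, ENNReal.ofReal (|Q k z y - Q k x y| * |φ z|) ∂μ).toReal :=
    integral_eq_lintegral_of_nonneg_ae
      (Filter.Eventually.of_forall fun z => mul_nonneg (abs_nonneg _) (abs_nonneg _))
      hsub'.aestronglyMeasurable
  have habs : |∫ z, Q k z y * φ z ∂μ| ≤ ∫ z, |Q k z y - Q k x y| * |φ z| ∂μ := by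
    rw [hT]
    have h16 := norm_integral_le_integral_norm (μ := μ) (fun z => (Q k z y - Q k x y) * φ z)
    simpa [Real.norm_eq_abs, abs_mul] using h16
  have htoReal : (∫⁻ z, ENNReal.ofReal (|Q k z y - Q k x y| * |φ z|) ∂μ).toReal ≤
      (P1 * CX1 + (P2 * CZ + P3 * CX2)).toReal := ENNReal.toReal_mono hfin hlint
  have hPt : (P1 * CX1 + (P2 * CZ + P3 * CX2)).toReal =
      ((s / r) ^ η' * (W1 * W2)) *
        (CQ * CX1.toReal + (CQ * CF * CZ.toReal + CQ * (2 * A0) ^ η' * CX2.toReal)) := by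
    rw [ENNReal.toReal_add hfin1 (ENNReal.add_ne_top.mpr ⟨hfin2, hfin3⟩),
      ENNReal.toReal_add hfin2 hfin3, ENNReal.toReal_mul, ENNReal.toReal_mul,
      ENNReal.toReal_mul, hP1, hP2, hP3,
      ENNReal.toReal_ofReal (by positivity), ENNReal.toReal_ofReal (by positivity),
      ENNReal.toReal_ofReal (by positivity)]
    ring
  have hW120 : 0 ≤ (s / r) ^ η' * (W1 * W2) := by positivity
  calc |∫ z, Q k z y * φ z ∂μ|
      ≤ (P1 * CX1 + (P2 * CZ + P3 * CX2)).toReal := by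
        rw [heqI] at habs; linarith only [habs, htoReal]
    _ = ((s / r) ^ η' * (W1 * W2)) *
        (CQ * CX1.toReal + (CQ * CF * CZ.toReal + CQ * (2 * A0) ^ η' * CX2.toReal)) := hPt
    _ ≤ ((s / r) ^ η' * (W1 * W2)) * C₁ := by
        refine mul_le_mul_of_nonneg_left ?_ hW120
        rw [hC₁]; linarith only []
    _ = C₁ * δ ^ (((l : ℝ) - (k : ℝ)) * η') * W1 * W2 := by
        rw [hgain]; ring
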